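/- Let T : C ⥤ C be an endofunctor of a category C and assume that the composite endofunctor T ⋙ T has a bifree algebra. If (V, a : T.obj V ⟶ V) is a bifree T-algebra, then (V, T.map a ≫ a : T.obj (T.obj V) ⟶ V) is a bifree (T ⋙ T)-algebra: it is an initial (T ⋙ T)-algebra, its structure map T.map a ≫ a is an isomorphism, and the coalgebra (V, (T.map a ≫ a)⁻¹) is a terminal (T ⋙ T)-coalgebra. -/
import Mathlib


open CategoryTheory CategoryTheory.Limits

/-- A bifree algebra for an endofunctor `T : C ⥤ C`: an algebra `(V, a)` that is initial
among `T`-algebras, whose structure map `a` is an isomorphism, and such that the coalgebra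
`(V, a⁻¹)` is terminal among `T`-coalgebras. -/
def IsBifreeAlgebra {C : Type*} [Category C] (T : C ⥤ C) (V : C) (a : T.obj V ⟶ V) : Prop :=
  Nonempty (IsInitial (Endofunctor.Algebra.mk V a : Endofunctor.Algebra T)) ∧
  ∃ hiso : IsIso a,
    Nonempty (IsTerminal
      (Endofunctor.Coalgebra.mk V (@inv _ _ _ _ a hiso) : Endofunctor.Coalgebra T))

/-- Freyd's squaring lemma: if `T ⋙ T` has some bifree algebra and `(V, a)` is a bifree
`T`-algebra, then `(V, T.map a ≫ a)` is a bifree `T ⋙ T`-algebra. -/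
theorem bifree_comp_self_of_bifree
    {C : Type*} [Category C] (T : C ⥤ C)
    (hTT : ∃ (W : C) (b : (T ⋙ T).obj W ⟶ W), IsBifreeAlgebra (T ⋙ T) W b)
    (V : C) (a : T.obj V ⟶ V) (h : IsBifreeAlgebra T V a) :
    IsBifreeAlgebra (T ⋙ T) V (T.map a ≫ a) := by
  obtain ⟨W, b, ⟨hIW⟩, hbiso, ⟨hTW⟩⟩ := hTT
  obtain ⟨⟨hIV⟩, haiso, ⟨hTV⟩⟩ := h
  haveI := hbiso; haveI := haiso
  -- the unique (T⋙T)-algebra morphism β : (W, b) ⟶ (T W, T b)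
  let βa : (Endofunctor.Algebra.mk W b : Endofunctor.Algebra (T ⋙ T)) ⟶
      Endofunctor.Algebra.mk (T.obj W) (T.map b) := hIW.to _
  let β : W ⟶ T.obj W := βa.f
  have βh : (T ⋙ T).map β ≫ T.map b = b ≫ β := βa.h
  -- β is an isomorphism with inverse γ = T β ≫ b
  have hβ1 : β ≫ T.map β ≫ b = 𝟙 W := by
    have : (⟨β ≫ T.map β ≫ b, ?_⟩ :
        (Endofunctor.Algebra.mk W b : Endofunctor.Algebra (T ⋙ T)) ⟶
          Endofunctor.Algebra.mk W b) =
            𝟙 (Endofunctor.Algebra.mk W b : Endofunctor.Algebra (T ⋙ T)) := hIW.hom_ext _ _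
    · simpa using congrArg Endofunctor.Algebra.Hom.f this
    · show (T ⋙ T).map (β ≫ T.map β ≫ b) ≫ b = b ≫ β ≫ T.map β ≫ b
      have key : (T ⋙ T).map (T.map β) ≫ (T ⋙ T).map b = T.map b ≫ T.map β := by
        have h2 : (T ⋙ T).map (T.map β) ≫ (T ⋙ T).map b =
            T.map ((T ⋙ T).map β ≫ T.map b) := by
          rw [T.map_comp]; rfl
        rw [h2, βh, T.map_comp]
      rw [Functor.map_comp, Functor.map_comp, Category.assoc, Category.assoc,
        ← Category.assoc ((T ⋙ T).map (T.map β)), key]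
      simp only [Category.assoc]
      slice_lhs 1 2 => rw [βh]
      simp only [Category.assoc]
  set γ : T.obj W ⟶ W := T.map β ≫ b with hγ
  have hβγ : β ≫ γ = 𝟙 W := hβ1
  have hγβ : γ ≫ β = 𝟙 (T.obj W) := by
    have : γ ≫ β = T.map (β ≫ T.map β ≫ b) := by
      rw [hγ]
      simp only [Category.assoc, T.map_comp]
      rw [← βh]; rfl
    rw [this, hβ1, T.map_id]
  have hb : T.map γ ≫ γ = b := by
    rw [hγ]
    calc T.map (T.map β ≫ b) ≫ T.map β ≫ b
        = T.map (T.map β ≫ b ≫ β) ≫ b := by simp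
      _ = b := by
          rw [show T.map β ≫ b ≫ β = 𝟙 (T.obj W) from by
            rw [← Category.assoc, ← hγ]; exact hγβ]
          simp
  -- the unique T-algebra morphism d : (V, a) ⟶ (W, γ)
  let da : (Endofunctor.Algebra.mk V a : Endofunctor.Algebra T) ⟶
      Endofunctor.Algebra.mk W γ := hIV.to _
  let d : V ⟶ W := da.f
  have dh : T.map d ≫ γ = a ≫ d := da.h
  -- the unique T-coalgebra morphism c : (W, β) ⟶ (V, a⁻¹)
  let ca : (Endofunctor.Coalgebra.mk W β : Endofunctor.Coalgebra T) ⟶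
      Endofunctor.Coalgebra.mk V (inv a) := hTV.from _
  let c : W ⟶ V := ca.f
  have ch : β ≫ T.map c = c ≫ inv a := ca.h
  have ch' : T.map c ≫ a = γ ≫ c := by
    have : c = β ≫ T.map c ≫ a := by
      rw [← Category.assoc, ch]; simp
    calc T.map c ≫ a = (γ ≫ β) ≫ T.map c ≫ a := by rw [hγβ]; simp
      _ = γ ≫ c := by rw [Category.assoc, ← this]
  -- d ≫ c = 𝟙 V by initiality of (V, a)
  have dc : d ≫ c = 𝟙 V := by
    have : (⟨d ≫ c, ?_⟩ :
        (Endofunctor.Algebra.mk V a : Endofunctor.Algebra T) ⟶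
          Endofunctor.Algebra.mk V a) =
            𝟙 (Endofunctor.Algebra.mk V a : Endofunctor.Algebra T) := hIV.hom_ext _ _
    · simpa using congrArg Endofunctor.Algebra.Hom.f this
    · show T.map (d ≫ c) ≫ a = a ≫ d ≫ c
      rw [T.map_comp, Category.assoc, ch', ← Category.assoc, dh, Category.assoc]
  -- c is a (T⋙T)-algebra morphism (W, b) ⟶ (V, T a ≫ a)
  have chh : (T ⋙ T).map c ≫ (T.map a ≫ a) = b ≫ c := by
    calc (T ⋙ T).map c ≫ T.map a ≫ a
        = T.map (T.map c ≫ a) ≫ a := by simp [Functor.comp_map]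
      _ = T.map (γ ≫ c) ≫ a := by rw [ch']
      _ = T.map γ ≫ T.map c ≫ a := by simp
      _ = T.map γ ≫ γ ≫ c := by rw [ch']
      _ = b ≫ c := by rw [← Category.assoc, hb]
  -- d is a (T⋙T)-algebra morphism (V, T a ≫ a) ⟶ (W, b)
  have dhh : (T ⋙ T).map d ≫ b = (T.map a ≫ a) ≫ d := by
    calc (T ⋙ T).map d ≫ b
        = T.map (T.map d ≫ γ) ≫ γ := by rw [← hb]; simp [Functor.comp_map]
      _ = T.map (a ≫ d) ≫ γ := by rw [dh]
      _ = T.map a ≫ T.map d ≫ γ := by simp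
      _ = (T.map a ≫ a) ≫ d := by rw [dh]; simp
  -- c ≫ d = 𝟙 W by initiality of (W, b)
  have cd : c ≫ d = 𝟙 W := by
    have : (⟨c ≫ d, ?_⟩ :
        (Endofunctor.Algebra.mk W b : Endofunctor.Algebra (T ⋙ T)) ⟶
          Endofunctor.Algebra.mk W b) =
            𝟙 (Endofunctor.Algebra.mk W b : Endofunctor.Algebra (T ⋙ T)) := hIW.hom_ext _ _
    · simpa using congrArg Endofunctor.Algebra.Hom.f this
    · show (T ⋙ T).map (c ≫ d) ≫ b = b ≫ c ≫ d
      rw [Functor.map_comp, Category.assoc, dhh]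
      simp only [Category.assoc]
      slice_lhs 1 3 => rw [chh]
      simp only [Category.assoc]
  -- assemble the (T⋙T)-algebra isomorphism (W, b) ≅ (V, T a ≫ a)
  let isoAlg : (Endofunctor.Algebra.mk W b : Endofunctor.Algebra (T ⋙ T)) ≅
      Endofunctor.Algebra.mk V (T.map a ≫ a) :=
    { hom := ⟨c, chh⟩
      inv := ⟨d, dhh⟩
      hom_inv_id := by ext; simp [cd]
      inv_hom_id := by ext; simp [dc] }
  have hIV2 : IsInitial
      (Endofunctor.Algebra.mk V (T.map a ≫ a) : Endofunctor.Algebra (T ⋙ T)) :=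
    hIW.ofIso isoAlg
  haveI hciso : IsIso c := ⟨d, cd, dc⟩
  haveI hdiso : IsIso d := ⟨c, dc, cd⟩
  haveI hiso2 : IsIso (T.map a ≫ a) := by
    have : T.map a ≫ a = inv ((T ⋙ T).map c) ≫ b ≫ c := by
      rw [← chh]; simp
    rw [this]; infer_instance
  refine ⟨⟨hIV2⟩, hiso2, ⟨?_⟩⟩
  -- the coalgebra isomorphism (W, b⁻¹) ≅ (V, (T a ≫ a)⁻¹)
  have chc : inv b ≫ (T ⋙ T).map c = c ≫ inv (T.map a ≫ a) := by
    rw [IsIso.inv_comp_eq, ← Category.assoc, ← chh, Category.assoc, IsIso.hom_inv_id,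
      Category.comp_id]
  have dhc : inv (T.map a ≫ a) ≫ (T ⋙ T).map d = d ≫ inv b := by
    rw [IsIso.inv_comp_eq, ← Category.assoc, ← dhh, Category.assoc, IsIso.hom_inv_id,
      Category.comp_id]
  let isoCo : (Endofunctor.Coalgebra.mk W (inv b) : Endofunctor.Coalgebra (T ⋙ T)) ≅
      Endofunctor.Coalgebra.mk V (inv (T.map a ≫ a)) :=
    { hom := ⟨c, chc⟩
      inv := ⟨d, dhc⟩
      hom_inv_id := by ext; simp [cd]
      inv_hom_id := by ext; simp [dc] }
  exact hTW.ofIso isoCo
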